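/- Let q̃ ∈ (0, 1/2), p̃ ∈ (1/2, 1), ν = (1−q̃)/q̃ > 1 and μ = p̃/(1−p̃) > 1. For positive integers a, b define α(a,b) = (ν^a − 1)/(ν^{a+b} − 1), β(a,b) = (μ^b − 1)/(μ^{a+b} − 1), E0(a,b) = (1 − ν^a)·(a+b)/((2q̃−1)·(1 − ν^{a+b})) − a/(2q̃−1), and E1(a,b) = (1 − μ^{−a})·(a+b)/((2p̃−1)·(1 − μ^{−(a+b)})) − a/(2p̃−1). Further define M_E⁰(α,β) = [(1−α)·ln(1/β)/ln μ − α·ln(1/α)/ln ν]/(1−2q̃) and M_E¹(α,β) = [(1−β)·ln(1/α)/ln ν − β·ln(1/β)/ln μ]/(2p̃−1). Then, along any sequences of positive integers with a → ∞ and b → ∞, E0(a,b) − M_E⁰(α(a,b), β(a,b)) → 0 and E1(a,b) − M_E¹(α(a,b), β(a,b)) → 0. -/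

import Mathlib

open Filter


lemma aux_key (c : ℝ) (hc : 1 < c) (A B : ℕ → ℕ)
    (hA1 : ∀ n, 0 < A n)
    (hA : Tendsto A atTop atTop) (hB : Tendsto B atTop atTop) :
    Tendsto (fun n => (c ^ A n - 1) / (c ^ (A n + B n) - 1)) atTop (nhds 0) ∧
    Tendsto (fun n =>
      Real.log (1 / ((c ^ A n - 1) / (c ^ (A n + B n) - 1))) / Real.log c - (B n : ℝ))
      atTop (nhds 0) := by
  have hc0 : (0:ℝ) < c := by linarith
  have hcne : c ≠ 0 := ne_of_gt hc0
  have hAB : Tendsto (fun n => A n + B n) atTop atTop :=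
    tendsto_atTop_mono (fun n => Nat.le_add_right _ _) hA
  have hpowA : Tendsto (fun n => c ^ A n) atTop atTop :=
    (tendsto_pow_atTop_atTop_of_one_lt hc).comp hA
  have hpowB : Tendsto (fun n => c ^ B n) atTop atTop :=
    (tendsto_pow_atTop_atTop_of_one_lt hc).comp hB
  have hpowAB : Tendsto (fun n => c ^ (A n + B n)) atTop atTop :=
    (tendsto_pow_atTop_atTop_of_one_lt hc).comp hAB
  have hinvA : Tendsto (fun n => (c ^ A n)⁻¹) atTop (nhds 0) := hpowA.inv_tendsto_atTop
  have hinvB : Tendsto (fun n => (c ^ B n)⁻¹) atTop (nhds 0) := hpowB.inv_tendsto_atTop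
  have hinvAB : Tendsto (fun n => (c ^ (A n + B n))⁻¹) atTop (nhds 0) :=
    hpowAB.inv_tendsto_atTop
  have h1A : ∀ n, 1 < c ^ A n := fun n => one_lt_pow₀ hc (hA1 n).ne'
  have h1AB : ∀ n, 1 < c ^ (A n + B n) := fun n =>
    one_lt_pow₀ hc (by have := hA1 n; omega : A n + B n ≠ 0)
  set g : ℕ → ℝ := fun n => (c ^ A n - 1) / (c ^ (A n + B n) - 1) with hg
  have hgpos : ∀ n, 0 < g n := fun n =>
    div_pos (by linarith [h1A n]) (by linarith [h1AB n])
  set r : ℕ → ℝ := fun n => g n * c ^ B n with hr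
  have hreq : ∀ n, r n = (1 - (c ^ A n)⁻¹) / (1 - (c ^ (A n + B n))⁻¹) := by
    intro n
    have hPA : (c:ℝ) ^ A n ≠ 0 := pow_ne_zero _ hcne
    have hPB : (c:ℝ) ^ B n ≠ 0 := pow_ne_zero _ hcne
    have hd : c ^ (A n + B n) - 1 ≠ 0 := by linarith [h1AB n]
    simp only [hr, hg]
    rw [pow_add] at hd ⊢
    field_simp
  have hrlim : Tendsto r atTop (nhds 1) := by
    have : Tendsto (fun n => (1 - (c ^ A n)⁻¹) / (1 - (c ^ (A n + B n))⁻¹)) atTop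
        (nhds ((1 - 0) / (1 - 0))) :=
      (tendsto_const_nhds.sub hinvA).div (tendsto_const_nhds.sub hinvAB) (by norm_num)
    simpa [hreq] using this.congr (fun n => (hreq n).symm)
  have hglim : Tendsto g atTop (nhds 0) := by
    have : Tendsto (fun n => r n * (c ^ B n)⁻¹) atTop (nhds (1 * 0)) := hrlim.mul hinvB
    refine Tendsto.congr (fun n => ?_) (by simpa using this)
    have hPB : (c:ℝ) ^ B n ≠ 0 := pow_ne_zero _ hcne
    field_simp [hr]
    simp only [hr]; ring
  constructor
  · exact hglim
  · have hlogc : Real.log c ≠ 0 := ne_of_gt (Real.log_pos hc)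
    have hrpos : ∀ n, 0 < r n := fun n => mul_pos (hgpos n) (pow_pos hc0 _)
    have hkey : ∀ n, Real.log (1 / g n) / Real.log c - (B n : ℝ)
        = -(Real.log (r n)) / Real.log c := by
      intro n
      have hPB : (0:ℝ) < c ^ B n := pow_pos hc0 _
      have hlg : Real.log (r n) = Real.log (g n) + (B n : ℝ) * Real.log c := by
        rw [hr]
        rw [Real.log_mul (hgpos n).ne' hPB.ne', Real.log_pow]
      rw [one_div, Real.log_inv]
      rw [eq_div_iff hlogc] at *
      field_simp
      linarith [hlg]
    have hloglim : Tendsto (fun n => Real.log (r n)) atTop (nhds 0) := by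
      have := (Real.continuousAt_log (one_ne_zero)).tendsto.comp hrlim
      simpa [Function.comp_def] using this
    have : Tendsto (fun n => -(Real.log (r n)) / Real.log c) atTop (nhds (-0 / Real.log c)) :=
      (hloglim.neg).div_const _
    have h0 : Tendsto (fun n => -(Real.log (r n)) / Real.log c) atTop (nhds 0) := by
      simpa only [neg_zero, zero_div] using this
    exact h0.congr (fun n => (hkey n).symm)


/-- Part 2 of Theorem 2 of the paper: the exact expected sample sizes `E0, E1` of the
eavesdropper's mismatched SPRT satisfy `E0 = M_E⁰(α,β) + o(1)` and
`E1 = M_E¹(α,β) + o(1)` as the (integer) thresholds tend to infinity. -/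
theorem stmt_9 (qt pt : ℝ) (hq : qt ∈ Set.Ioo (0 : ℝ) (1 / 2))
    (hp : pt ∈ Set.Ioo (1 / 2 : ℝ) 1)
    (ν μ : ℝ) (hν : ν = (1 - qt) / qt) (hμ : μ = pt / (1 - pt))
    (α β E0 E1 : ℕ → ℕ → ℝ)
    (hα : ∀ a b, α a b = (ν ^ a - 1) / (ν ^ (a + b) - 1))
    (hβ : ∀ a b, β a b = (μ ^ b - 1) / (μ ^ (a + b) - 1))
    (hE0 : ∀ a b, E0 a b =
      (1 - ν ^ a) * ((a : ℝ) + (b : ℝ)) / ((2 * qt - 1) * (1 - ν ^ (a + b)))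
        - (a : ℝ) / (2 * qt - 1))
    (hE1 : ∀ a b, E1 a b =
      (1 - μ ^ (-(a : ℤ))) * ((a : ℝ) + (b : ℝ)) /
          ((2 * pt - 1) * (1 - μ ^ (-((a : ℤ) + (b : ℤ)))))
        - (a : ℝ) / (2 * pt - 1))
    (M0 M1 : ℝ → ℝ → ℝ)
    (hM0 : ∀ x y, M0 x y =
      ((1 - x) * (Real.log (1 / y) / Real.log μ) - x * (Real.log (1 / x) / Real.log ν))
        / (1 - 2 * qt))
    (hM1 : ∀ x y, M1 x y =
      ((1 - y) * (Real.log (1 / x) / Real.log ν) - y * (Real.log (1 / y) / Real.log μ))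
        / (2 * pt - 1)) :
    ∀ an bn : ℕ → ℕ, (∀ n, 0 < an n) → (∀ n, 0 < bn n) →
      Tendsto an atTop atTop → Tendsto bn atTop atTop →
      Tendsto (fun n => E0 (an n) (bn n) - M0 (α (an n) (bn n)) (β (an n) (bn n)))
        atTop (nhds 0) ∧
      Tendsto (fun n => E1 (an n) (bn n) - M1 (α (an n) (bn n)) (β (an n) (bn n)))
        atTop (nhds 0) := by
  intro an bn han hbn hA hB
  obtain ⟨hq0, hq2⟩ := hq
  obtain ⟨hp2, hp1⟩ := hp
  have hν1 : 1 < ν := by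
    rw [hν, one_lt_div hq0]; linarith
  have hμ1 : 1 < μ := by
    have h1p : (0:ℝ) < 1 - pt := by linarith
    rw [hμ, one_lt_div h1p]; linarith
  obtain ⟨hα0', hεα'⟩ := aux_key ν hν1 an bn han hA hB
  obtain ⟨hβ0', hεβ'⟩ := aux_key μ hμ1 bn an hbn hB hA
  have hαeq : ∀ n, α (an n) (bn n) = (ν ^ an n - 1) / (ν ^ (an n + bn n) - 1) :=
    fun n => hα _ _
  have hβeq : ∀ n, β (an n) (bn n) = (μ ^ bn n - 1) / (μ ^ (bn n + an n) - 1) := by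
    intro n; rw [hβ, add_comm (an n)]
  have hα0 : Tendsto (fun n => α (an n) (bn n)) atTop (nhds 0) :=
    hα0'.congr fun n => (hαeq n).symm
  have hβ0 : Tendsto (fun n => β (an n) (bn n)) atTop (nhds 0) :=
    hβ0'.congr fun n => (hβeq n).symm
  have hεα : Tendsto (fun n =>
      Real.log (1 / α (an n) (bn n)) / Real.log ν - (bn n : ℝ)) atTop (nhds 0) :=
    hεα'.congr fun n => by rw [hαeq n]
  have hεβ : Tendsto (fun n =>
      Real.log (1 / β (an n) (bn n)) / Real.log μ - (an n : ℝ)) atTop (nhds 0) :=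
    hεβ'.congr fun n => by rw [hβeq n]
  have hqne : 2 * qt - 1 ≠ 0 := by intro h; nlinarith
  have hpne : 2 * pt - 1 ≠ 0 := by intro h; nlinarith
  have hν0 : (0:ℝ) < ν := by linarith
  have hμ0 : (0:ℝ) < μ := by linarith
  constructor
  · -- E0 part
    have key0 : ∀ n, E0 (an n) (bn n) - M0 (α (an n) (bn n)) (β (an n) (bn n))
        = (α (an n) (bn n) * (Real.log (1 / α (an n) (bn n)) / Real.log ν - (bn n : ℝ))
            - (1 - α (an n) (bn n)) *
              (Real.log (1 / β (an n) (bn n)) / Real.log μ - (an n : ℝ)))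
          / (1 - 2 * qt) := by
      intro n
      have h1Q : 1 < ν ^ (an n + bn n) :=
        one_lt_pow₀ hν1 (by have := han n; omega)
      have hQ1 : ν ^ (an n + bn n) - 1 ≠ 0 := by linarith
      have hQ1' : 1 - ν ^ (an n + bn n) ≠ 0 := by intro h; linarith
      have hE0' : E0 (an n) (bn n)
          = ((an n : ℝ) - α (an n) (bn n) * ((an n : ℝ) + (bn n : ℝ))) / (1 - 2 * qt) := by
        have h12 : 1 - 2 * qt ≠ 0 := by intro h; apply hqne; linarith
        rw [hE0, hα]
        field_simp [hQ1, hQ1', hqne, h12]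
        ring
      rw [hE0', hM0]
      ring
    have hlim : Tendsto (fun n =>
        (α (an n) (bn n) * (Real.log (1 / α (an n) (bn n)) / Real.log ν - (bn n : ℝ))
            - (1 - α (an n) (bn n)) *
              (Real.log (1 / β (an n) (bn n)) / Real.log μ - (an n : ℝ)))
          / (1 - 2 * qt)) atTop
        (nhds ((0 * 0 - (1 - 0) * 0) / (1 - 2 * qt))) :=
      ((hα0.mul hεα).sub ((tendsto_const_nhds.sub hα0).mul hεβ)).div_const _
    have hlim0 : Tendsto (fun n =>
        (α (an n) (bn n) * (Real.log (1 / α (an n) (bn n)) / Real.log ν - (bn n : ℝ))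
            - (1 - α (an n) (bn n)) *
              (Real.log (1 / β (an n) (bn n)) / Real.log μ - (an n : ℝ)))
          / (1 - 2 * qt)) atTop (nhds 0) := by
      convert hlim using 2; norm_num
    exact hlim0.congr fun n => (key0 n).symm
  · -- E1 part
    have key1 : ∀ n, E1 (an n) (bn n) - M1 (α (an n) (bn n)) (β (an n) (bn n))
        = (β (an n) (bn n) * (Real.log (1 / β (an n) (bn n)) / Real.log μ - (an n : ℝ))
            - (1 - β (an n) (bn n)) *
              (Real.log (1 / α (an n) (bn n)) / Real.log ν - (bn n : ℝ)))
          / (2 * pt - 1) := by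
      intro n
      have hz1 : μ ^ (-(an n : ℤ)) = (μ ^ an n)⁻¹ := by
        rw [zpow_neg, zpow_natCast]
      have hz2 : μ ^ (-((an n : ℤ) + (bn n : ℤ))) = (μ ^ (an n + bn n))⁻¹ := by
        rw [show ((an n : ℤ) + (bn n : ℤ)) = ((an n + bn n : ℕ) : ℤ) by push_cast; ring,
          zpow_neg, zpow_natCast]
      have h1Q : 1 < μ ^ (an n + bn n) :=
        one_lt_pow₀ hμ1 (by have := han n; omega)
      have hQ0 : (0:ℝ) < μ ^ (an n + bn n) := by linarith
      have hQ1 : μ ^ (an n + bn n) - 1 ≠ 0 := by linarith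
      have hiQ : 1 - (μ ^ (an n + bn n))⁻¹ ≠ 0 := by
        have : (μ ^ (an n + bn n))⁻¹ < 1 := by
          rw [inv_lt_one_iff₀]; right; exact h1Q
        intro h; linarith
      have hP : (μ:ℝ) ^ an n ≠ 0 := pow_ne_zero _ (ne_of_gt hμ0)
      have hR : (μ:ℝ) ^ bn n ≠ 0 := pow_ne_zero _ (ne_of_gt hμ0)
      have hE1' : E1 (an n) (bn n)
          = ((1 - β (an n) (bn n)) * ((an n : ℝ) + (bn n : ℝ)) - (an n : ℝ))
            / (2 * pt - 1) := by
        rw [hE1, hz1, hz2, hβ]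
        rw [pow_add] at hQ1 hiQ ⊢
        field_simp [hP, hR, hQ1, hiQ, hpne]
        ring
      rw [hE1', hM1]
      ring
    have hlim : Tendsto (fun n =>
        (β (an n) (bn n) * (Real.log (1 / β (an n) (bn n)) / Real.log μ - (an n : ℝ))
            - (1 - β (an n) (bn n)) *
              (Real.log (1 / α (an n) (bn n)) / Real.log ν - (bn n : ℝ)))
          / (2 * pt - 1)) atTop
        (nhds ((0 * 0 - (1 - 0) * 0) / (2 * pt - 1))) :=
      ((hβ0.mul hεβ).sub ((tendsto_const_nhds.sub hβ0).mul hεα)).div_const _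
    have hlim0 : Tendsto (fun n =>
        (β (an n) (bn n) * (Real.log (1 / β (an n) (bn n)) / Real.log μ - (an n : ℝ))
            - (1 - β (an n) (bn n)) *
              (Real.log (1 / α (an n) (bn n)) / Real.log ν - (bn n : ℝ)))
          / (2 * pt - 1)) atTop (nhds 0) := by
      convert hlim using 2; norm_num
    exact hlim0.congr fun n => (key1 n).symm
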